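/- Fix an integer s ≥ 1, γ_{00}, γ_{10} ∈ [0,1], assume δ_{11} > 0, δ_{10} > 0 and δ_{00} > 0, let Y̲^B ∈ ℝ satisfy Y̲^B ≤ Y^B_i for all units i, let x ≥ Y̲^B, and let μ and ν be Borel probability measures on ℝ with μ((−∞, Y̲^B)) = 0 and ν((−∞, Y̲^B)) = 0 such that, for all u ∈ ℝ, F_B(u | 0,0) = (1 − γ_{00})·F_B(u | 1,1) + γ_{00}·μ((−∞, u]) and F_B(u | 1,0) = (1 − γ_{10})·F_B(u | 1,1) + γ_{10}·ν((−∞, u]). Then E_B[g_{s,x} | 1,1]·(δ_{11} + (1 − γ_{00})·δ_{00} + (1 − γ_{10})·δ_{10}) ≤ D^s_B(x) ≤ E_B[g_{s,x} | 1,1]·(δ_{11} + (1 − γ_{00})·δ_{00} + (1 − γ_{10})·δ_{10}) + ((x − Y̲^B)^{s−1}/(s−1)!)·(γ_{00}·δ_{00} + γ_{10}·δ_{10}). (Population B part of Proposition D.4: identification bounds under the Kline–Santos mixture decomposition for unit and wave nonresponse.) -/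

import Mathlib

open Finset

noncomputable section

/-- Fraction of units in the response class `(a, b)`. -/
def delta {N : ℕ} (ZA ZB : Fin N → Bool) (a b : Bool) : ℝ :=
  ((univ.filter (fun i => ZA i = a ∧ ZB i = b)).card : ℝ) / N

/-- Conditional mean of `g ∘ Y` given the response class `(a, b)`. -/
def condMean {N : ℕ} (Y : Fin N → ℝ) (ZA ZB : Fin N → Bool) (a b : Bool) (g : ℝ → ℝ) : ℝ :=
  (∑ i ∈ univ.filter (fun i => ZA i = a ∧ ZB i = b), g (Y i)) / ((N : ℝ) * delta ZA ZB a b)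

/-- Conditional CDF of `Y` given the response class `(a, b)`. -/
def condCDF' {N : ℕ} (Y : Fin N → ℝ) (ZA ZB : Fin N → Bool) (a b : Bool) (x : ℝ) : ℝ :=
  ((univ.filter (fun i => Y i ≤ x ∧ ZA i = a ∧ ZB i = b)).card : ℝ) / ((N : ℝ) * delta ZA ZB a b)

/-- Population CDF of `Y`. -/
def popCDF {N : ℕ} (Y : Fin N → ℝ) (x : ℝ) : ℝ :=
  ((univ.filter (fun i => Y i ≤ x)).card : ℝ) / N

/-- `s`-th order dominance function of the population `Y`. -/
def domFn {N : ℕ} (Y : Fin N → ℝ) (s : ℕ) (x : ℝ) : ℝ :=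
  (∑ i ∈ univ.filter (fun i => Y i ≤ x), (x - Y i) ^ (s - 1) / ((s - 1).factorial : ℝ)) / N

/-- `g_{s,x}(y) = ((x-y)^{s-1}/(s-1)!) 1[y ≤ x]`. -/
def gfun (s : ℕ) (x : ℝ) : ℝ → ℝ :=
  fun y => ((x - y) ^ (s - 1) / ((s - 1).factorial : ℝ)) * (if y ≤ x then 1 else 0)

open MeasureTheory
open scoped ENNReal Classical

lemma gfun_meas (s : ℕ) (x : ℝ) : Measurable (gfun s x) := by
  unfold gfun
  apply Measurable.mul
  · exact ((measurable_const.sub measurable_id).pow_const _).div_const _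
  · exact Measurable.ite measurableSet_Iic measurable_const measurable_const

lemma gfun_nonneg (s : ℕ) (x y : ℝ) : 0 ≤ gfun s x y := by
  unfold gfun
  by_cases h : y ≤ x
  · simp only [h, if_true, mul_one]
    have : (0:ℝ) ≤ x - y := by linarith
    positivity
  · simp [h]

lemma gfun_le (s : ℕ) (x YlB y : ℝ) (hx : YlB ≤ x) (hy : YlB ≤ y) :
    gfun s x y ≤ (x - YlB) ^ (s - 1) / ((s - 1).factorial : ℝ) := by
  have hC : (0:ℝ) ≤ (x - YlB) ^ (s - 1) / ((s - 1).factorial : ℝ) := by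
    have : (0:ℝ) ≤ x - YlB := by linarith
    positivity
  unfold gfun
  by_cases h : y ≤ x
  · simp only [h, if_true, mul_one]
    have hpow : (x - y) ^ (s-1) ≤ (x - YlB) ^ (s-1) :=
      pow_le_pow_left₀ (by linarith) (by linarith) _
    have hfact : (0:ℝ) < ((s-1).factorial : ℝ) := Nat.cast_pos.mpr (Nat.factorial_pos _)
    exact (div_le_div_iff_of_pos_right hfact).mpr hpow
  · simp [h, hC]

/-- Empirical measure of `Y` over the finset `t`. -/
def empM {N : ℕ} (Y : Fin N → ℝ) (t : Finset (Fin N)) : Measure ℝ :=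
  ((t.card : ℝ≥0∞))⁻¹ • ∑ i ∈ t, Measure.dirac (Y i)

lemma empM_apply {N : ℕ} (Y : Fin N → ℝ) (t : Finset (Fin N)) (A : Set ℝ)
    (hA : MeasurableSet A) :
    empM Y t A = ((t.card : ℝ≥0∞))⁻¹ * ((t.filter (fun i => Y i ∈ A)).card : ℝ≥0∞) := by
  classical
  rw [empM, Measure.smul_apply, Measure.finset_sum_apply, smul_eq_mul]
  congr 1
  rw [Finset.card_filter]
  push_cast
  refine Finset.sum_congr rfl (fun i _ => ?_)
  rw [Measure.dirac_apply' _ hA]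
  by_cases h : Y i ∈ A <;> simp [h, Set.indicator]

lemma empM_prob {N : ℕ} (Y : Fin N → ℝ) (t : Finset (Fin N)) (ht : t.Nonempty) :
    IsProbabilityMeasure (empM Y t) := by
  constructor
  rw [empM, Measure.smul_apply, Measure.finset_sum_apply, smul_eq_mul]
  simp only [Measure.dirac_apply' _ MeasurableSet.univ, Set.indicator_univ,
    Pi.one_apply, Finset.sum_const, nsmul_eq_mul, mul_one]
  rw [ENNReal.inv_mul_cancel]
  · exact_mod_cast Finset.card_ne_zero_of_mem ht.choose_spec
  · exact ENNReal.natCast_ne_top _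

lemma integrable_empM {N : ℕ} (Y : Fin N → ℝ) (t : Finset (Fin N)) {g : ℝ → ℝ}
    (hg : Measurable g) (ht : t.Nonempty) : Integrable g (empM Y t) := by
  apply Integrable.smul_measure
  · apply integrable_finset_sum_measure.2
    intro i _
    refine ⟨hg.aestronglyMeasurable, ?_⟩
    rw [HasFiniteIntegral, MeasureTheory.lintegral_dirac]
    exact ENNReal.coe_lt_top
  · simp only [ne_eq, ENNReal.inv_eq_top, Nat.cast_eq_zero]
    exact Finset.card_ne_zero_of_mem ht.choose_spec

lemma integral_empM {N : ℕ} (Y : Fin N → ℝ) (t : Finset (Fin N)) {g : ℝ → ℝ}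
    (hg : Measurable g) :
    ∫ y, g y ∂(empM Y t) = ((t.card : ℝ))⁻¹ * ∑ i ∈ t, g (Y i) := by
  rw [empM, integral_smul_measure, integral_finset_sum_measure]
  · simp only [MeasureTheory.integral_dirac, smul_eq_mul]
    congr 1
    simp [ENNReal.toReal_inv]
  · intro i _
    refine ⟨hg.aestronglyMeasurable, ?_⟩
    rw [HasFiniteIntegral, MeasureTheory.lintegral_dirac]
    exact ENNReal.coe_lt_top

/-- Population B part of Proposition D.4: identification bounds under the
Kline–Santos mixture decomposition for unit and wave nonresponse. -/
theorem kline_santos_bounds_B {N : ℕ} (hN : 1 ≤ N)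
    (YA YB : Fin N → ℝ) (ZA ZB : Fin N → Bool)
    (hno : ∀ i, ¬(ZA i = false ∧ ZB i = true))
    (s : ℕ) (hs : 1 ≤ s)
    (γ00 γ10 : ℝ) (hγ00 : γ00 ∈ Set.Icc (0 : ℝ) 1) (hγ10 : γ10 ∈ Set.Icc (0 : ℝ) 1)
    (h11 : 0 < delta ZA ZB true true) (h10 : 0 < delta ZA ZB true false)
    (h00 : 0 < delta ZA ZB false false)
    (YlB : ℝ) (hYB : ∀ i, YlB ≤ YB i)
    (x : ℝ) (hx : YlB ≤ x)
    (μ ν : Measure ℝ) [IsProbabilityMeasure μ] [IsProbabilityMeasure ν]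
    (hsuppμ : μ (Set.Iio YlB) = 0) (hsuppν : ν (Set.Iio YlB) = 0)
    (hmix00 : ∀ u : ℝ, condCDF' YB ZA ZB false false u =
      (1 - γ00) * condCDF' YB ZA ZB true true u + γ00 * (μ (Set.Iic u)).toReal)
    (hmix10 : ∀ u : ℝ, condCDF' YB ZA ZB true false u =
      (1 - γ10) * condCDF' YB ZA ZB true true u + γ10 * (ν (Set.Iic u)).toReal) :
    condMean YB ZA ZB true true (gfun s x)
        * (delta ZA ZB true true + (1 - γ00) * delta ZA ZB false false
            + (1 - γ10) * delta ZA ZB true false)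
      ≤ domFn YB s x ∧
    domFn YB s x ≤
      condMean YB ZA ZB true true (gfun s x)
        * (delta ZA ZB true true + (1 - γ00) * delta ZA ZB false false
            + (1 - γ10) * delta ZA ZB true false)
      + ((x - YlB) ^ (s - 1) / ((s - 1).factorial : ℝ))
          * (γ00 * delta ZA ZB false false + γ10 * delta ZA ZB true false) := by
  classical
  obtain ⟨hγ00l, hγ00u⟩ := hγ00
  obtain ⟨hγ10l, hγ10u⟩ := hγ10
  have hgm := gfun_meas s x
  set g := gfun s x with hgdef
  set C := (x - YlB) ^ (s - 1) / ((s - 1).factorial : ℝ) with hCdef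
  have hxY : (0:ℝ) ≤ x - YlB := by linarith
  have hC0 : 0 ≤ C := by rw [hCdef]; positivity
  have hNpos : (0:ℝ) < N := by exact_mod_cast hN
  have hN0 : (N:ℝ) ≠ 0 := ne_of_gt hNpos
  -- class finsets
  have hNδ : ∀ a b : Bool, (N:ℝ) * delta ZA ZB a b
      = ((univ.filter (fun i => ZA i = a ∧ ZB i = b)).card : ℝ) := by
    intro a b; rw [delta, mul_comm, div_mul_cancel₀ _ hN0]
  have hcard : ∀ a b : Bool, 0 < delta ZA ZB a b →
      (univ.filter (fun i => ZA i = a ∧ ZB i = b)).Nonempty := by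
    intro a b h
    rw [← Finset.card_pos]
    have : (0:ℝ) < ((univ.filter (fun i => ZA i = a ∧ ZB i = b)).card : ℝ) := by
      rw [← hNδ a b]; positivity
    exact_mod_cast this
  have hne11 := hcard true true h11
  have hne10 := hcard true false h10
  have hne00 := hcard false false h00
  -- CDF of empirical measures
  have hcdf_nonneg : ∀ (a b : Bool) (u : ℝ), 0 ≤ condCDF' YB ZA ZB a b u := by
    intro a b u
    exact div_nonneg (Nat.cast_nonneg _)
      (mul_nonneg (Nat.cast_nonneg _) (div_nonneg (Nat.cast_nonneg _) (Nat.cast_nonneg _)))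
  have hP : ∀ (a b : Bool), 0 < delta ZA ZB a b → ∀ u : ℝ,
      empM YB (univ.filter (fun i => ZA i = a ∧ ZB i = b)) (Set.Iic u)
        = ENNReal.ofReal (condCDF' YB ZA ZB a b u) := by
    intro a b hab u
    rw [empM_apply _ _ _ measurableSet_Iic]
    have hfil : (univ.filter (fun i => ZA i = a ∧ ZB i = b)).filter
        (fun i => YB i ∈ Set.Iic u)
        = univ.filter (fun i => YB i ≤ u ∧ ZA i = a ∧ ZB i = b) := by
      ext i
      simp only [Finset.mem_filter, Finset.mem_univ, true_and, Set.mem_Iic]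
      tauto
    erw [hfil]
    rw [condCDF', hNδ a b]
    have hcpos : (0:ℝ) < ((univ.filter (fun i => ZA i = a ∧ ZB i = b)).card : ℝ) := by
      rw [← hNδ a b]; positivity
    rw [ENNReal.ofReal_div_of_pos hcpos]
    rw [ENNReal.ofReal_natCast, ENNReal.ofReal_natCast, div_eq_mul_inv, mul_comm]
  -- integrability w.r.t. μ and ν
  have haeμ : ∀ᵐ y ∂μ, YlB ≤ y := by
    rw [ae_iff]
    convert hsuppμ using 2
    ext y; simp [not_le, Set.mem_Iio]
  have haeν : ∀ᵐ y ∂ν, YlB ≤ y := by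
    rw [ae_iff]
    convert hsuppν using 2
    ext y; simp [not_le, Set.mem_Iio]
  have hIntμ : Integrable g μ := by
    refine Integrable.mono' (integrable_const C) hgm.aestronglyMeasurable ?_
    filter_upwards [haeμ] with y hy
    rw [Real.norm_of_nonneg (gfun_nonneg s x y)]
    exact gfun_le s x YlB y hx hy
  have hIntν : Integrable g ν := by
    refine Integrable.mono' (integrable_const C) hgm.aestronglyMeasurable ?_
    filter_upwards [haeν] with y hy
    rw [Real.norm_of_nonneg (gfun_nonneg s x y)]
    exact gfun_le s x YlB y hx hy
  -- bounds on the integrals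
  have hIμ0 : 0 ≤ ∫ y, g y ∂μ := integral_nonneg (fun y => gfun_nonneg s x y)
  have hIν0 : 0 ≤ ∫ y, g y ∂ν := integral_nonneg (fun y => gfun_nonneg s x y)
  have hIμC : ∫ y, g y ∂μ ≤ C := by
    calc ∫ y, g y ∂μ ≤ ∫ _, C ∂μ := by
          refine integral_mono_ae hIntμ (integrable_const C) ?_
          filter_upwards [haeμ] with y hy
          exact gfun_le s x YlB y hx hy
      _ = C := by simp
  have hIνC : ∫ y, g y ∂ν ≤ C := by
    calc ∫ y, g y ∂ν ≤ ∫ _, C ∂ν := by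
          refine integral_mono_ae hIntν (integrable_const C) ?_
          filter_upwards [haeν] with y hy
          exact gfun_le s x YlB y hx hy
      _ = C := by simp
  -- the measure mixture identities
  have hmixM : ∀ (a' : Bool) (γ : ℝ), 0 ≤ γ → γ ≤ 1 →
      ∀ (κ : Measure ℝ), IsProbabilityMeasure κ →
      (∀ u : ℝ, condCDF' YB ZA ZB a' false u =
        (1 - γ) * condCDF' YB ZA ZB true true u + γ * (κ (Set.Iic u)).toReal) →
      0 < delta ZA ZB a' false →
      empM YB (univ.filter (fun i => ZA i = a' ∧ ZB i = false))
        = ENNReal.ofReal (1 - γ) • empM YB (univ.filter (fun i => ZA i = true ∧ ZB i = true))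
          + ENNReal.ofReal γ • κ := by
    intro a' γ hγ0 hγ1 κ hκ hmix hδ
    haveI := hκ
    haveI : IsProbabilityMeasure
        (empM YB (univ.filter (fun i => ZA i = a' ∧ ZB i = false))) :=
      empM_prob _ _ (hcard _ _ hδ)
    haveI : IsProbabilityMeasure
        (empM YB (univ.filter (fun i => ZA i = true ∧ ZB i = true))) :=
      empM_prob _ _ hne11
    haveI : IsFiniteMeasure
        (ENNReal.ofReal (1 - γ) • empM YB (univ.filter (fun i => ZA i = true ∧ ZB i = true))
          + ENNReal.ofReal γ • κ) := by
      constructor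
      rw [Measure.add_apply, Measure.smul_apply, Measure.smul_apply, smul_eq_mul, smul_eq_mul]
      exact ENNReal.add_lt_top.2
        ⟨ENNReal.mul_lt_top ENNReal.ofReal_lt_top (measure_lt_top _ _),
         ENNReal.mul_lt_top ENNReal.ofReal_lt_top (measure_lt_top _ _)⟩
    refine MeasureTheory.Measure.ext_of_Iic _ _ (fun u => ?_)
    rw [hP _ _ hδ u, hmix u,
      Measure.add_apply, Measure.smul_apply, Measure.smul_apply, smul_eq_mul, smul_eq_mul,
      hP true true h11 u]
    rw [ENNReal.ofReal_add (mul_nonneg (by linarith) (hcdf_nonneg true true u))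
        (mul_nonneg hγ0 ENNReal.toReal_nonneg),
      ENNReal.ofReal_mul (by linarith : (0:ℝ) ≤ 1 - γ), ENNReal.ofReal_mul hγ0,
      ENNReal.ofReal_toReal (measure_ne_top κ _)]
  have hμeq := hmixM false γ00 hγ00l hγ00u μ ‹_› hmix00 h00
  have hνeq := hmixM true γ10 hγ10l hγ10u ν ‹_› hmix10 h10
  -- conditional means as integrals
  have hCM : ∀ a b : Bool, 0 < delta ZA ZB a b →
      condMean YB ZA ZB a b g
        = ∫ y, g y ∂(empM YB (univ.filter (fun i => ZA i = a ∧ ZB i = b))) := by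
    intro a b hab
    rw [integral_empM _ _ hgm, condMean, hNδ a b, div_eq_inv_mul]
  -- mixture identities for conditional means
  have hInt11 : Integrable g
      (empM YB (univ.filter (fun i => ZA i = true ∧ ZB i = true))) :=
    integrable_empM _ _ hgm hne11
  have hEmix : ∀ (a' : Bool) (γ : ℝ) (hγ0 : 0 ≤ γ) (κ : Measure ℝ)
      (hκi : Integrable g κ),
      empM YB (univ.filter (fun i => ZA i = a' ∧ ZB i = false))
        = ENNReal.ofReal (1 - γ) • empM YB (univ.filter (fun i => ZA i = true ∧ ZB i = true))
          + ENNReal.ofReal γ • κ →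
      (0 < delta ZA ZB a' false) → (0 ≤ 1 - γ) →
      condMean YB ZA ZB a' false g
        = (1 - γ) * condMean YB ZA ZB true true g + γ * ∫ y, g y ∂κ := by
    intro a' γ hγ0 κ hκi heq hδ h1γ
    rw [hCM _ _ hδ, heq, integral_add_measure
        (hInt11.smul_measure ENNReal.ofReal_ne_top) (hκi.smul_measure ENNReal.ofReal_ne_top),
      integral_smul_measure, integral_smul_measure,
      ENNReal.toReal_ofReal h1γ, ENNReal.toReal_ofReal hγ0, smul_eq_mul, smul_eq_mul,
      hCM true true h11]
  have hE00 := hEmix false γ00 hγ00l μ hIntμ hμeq h00 (by linarith)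
  have hE10 := hEmix true γ10 hγ10l ν hIntν hνeq h10 (by linarith)
  -- decomposition of the dominance function
  have hdom : domFn YB s x =
      ((∑ i ∈ univ.filter (fun i => ZA i = true ∧ ZB i = true), g (YB i))
        + (∑ i ∈ univ.filter (fun i => ZA i = true ∧ ZB i = false), g (YB i))
        + (∑ i ∈ univ.filter (fun i => ZA i = false ∧ ZB i = false), g (YB i))) / N := by
    rw [domFn]
    congr 1
    have h1 : ∑ i ∈ univ.filter (fun i => YB i ≤ x),
        (x - YB i) ^ (s - 1) / ((s - 1).factorial : ℝ) = ∑ i : Fin N, g (YB i) := by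
      rw [Finset.sum_filter]
      refine Finset.sum_congr rfl fun i _ => ?_
      by_cases h : YB i ≤ x <;> simp [hgdef, gfun, h]
    rw [h1]
    rw [Finset.sum_filter, Finset.sum_filter, Finset.sum_filter,
      ← Finset.sum_add_distrib, ← Finset.sum_add_distrib]
    refine Finset.sum_congr rfl fun i _ => ?_
    rcases hZA : ZA i with _ | _ <;> rcases hZB : ZB i with _ | _
    · simp [hZA, hZB]
    · exact (hno i ⟨hZA, hZB⟩).elim
    · simp [hZA, hZB]
    · simp [hZA, hZB]
  -- sums as card * condMean
  have hsum : ∀ a b : Bool, 0 < delta ZA ZB a b →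
      ∑ i ∈ univ.filter (fun i => ZA i = a ∧ ZB i = b), g (YB i)
        = ((N:ℝ) * delta ZA ZB a b) * condMean YB ZA ZB a b g := by
    intro a b hab
    rw [condMean, mul_div_cancel₀]
    positivity
  have hdom2 : domFn YB s x
      = delta ZA ZB true true * condMean YB ZA ZB true true g
        + delta ZA ZB true false * condMean YB ZA ZB true false g
        + delta ZA ZB false false * condMean YB ZA ZB false false g := by
    rw [hdom, hsum true true h11, hsum true false h10, hsum false false h00]
    field_simp
  -- final algebra
  set E11 := condMean YB ZA ZB true true g
  set Iμ := ∫ y, g y ∂μ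
  set Iν := ∫ y, g y ∂ν
  set d11 := delta ZA ZB true true
  set d10 := delta ZA ZB true false
  set d00 := delta ZA ZB false false
  have hfinal : domFn YB s x
      = E11 * (d11 + (1 - γ00) * d00 + (1 - γ10) * d10)
        + γ00 * d00 * Iμ + γ10 * d10 * Iν := by
    rw [hdom2, hE00, hE10]; ring
  constructor
  · rw [hfinal]
    nlinarith [mul_nonneg (mul_nonneg hγ00l h00.le) hIμ0,
      mul_nonneg (mul_nonneg hγ10l h10.le) hIν0]
  · rw [hfinal]
    nlinarith [mul_le_mul_of_nonneg_left hIμC (mul_nonneg hγ00l h00.le),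
      mul_le_mul_of_nonneg_left hIνC (mul_nonneg hγ10l h10.le)]
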